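/- Let a₁ > a₂ ≥ 0 and r ≥ 0 be integers. In ℚ[[t₁,t₂,u]], the coefficient of t₁^{a₁} t₂^{a₂} u^r in the expansion of (t₁ − t₂) / ((1 − 2t₂ + t₁t₂)(1 − t₁(1+u))(1 − t₂(1+u))) equals the coefficient of t₁^{a₁} t₂^{a₂} u^r in the expansion of 1 / ((1 − t₁(1+u))(1 + u − t₂(1+2u))). -/

import Mathlib

open MvPowerSeries Finsupp

/-- A power series is "good" if every monomial in its support has
`t₂`-exponent ≥ `t₁`-exponent. -/
def Good (f : MvPowerSeries (Fin 3) ℚ) : Prop :=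
  ∀ m : Fin 3 →₀ ℕ, m 1 < m 0 → MvPowerSeries.coeff (R := ℚ) m f = 0

lemma good_add {f g} (hf : Good f) (hg : Good g) : Good (f + g) := by
  intro m hm; simp [map_add, hf m hm, hg m hm]

lemma good_neg {f} (hf : Good f) : Good (-f) := by
  intro m hm; simp [hf m hm]

lemma good_sub {f g} (hf : Good f) (hg : Good g) : Good (f - g) := by
  intro m hm; simp [map_sub, hf m hm, hg m hm]

lemma good_monomial (n : Fin 3 →₀ ℕ) (c : ℚ) (h : n 0 ≤ n 1) :
    Good (MvPowerSeries.monomial (R := ℚ) n c) := by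
  intro m hm
  rw [MvPowerSeries.coeff_monomial, if_neg]
  rintro rfl; omega

lemma good_one : Good 1 := by
  have := good_monomial (0 : Fin 3 →₀ ℕ) 1 (le_refl _)
  simpa using this

lemma good_mul {f g} (hf : Good f) (hg : Good g) : Good (f * g) := by
  intro m hm
  rw [MvPowerSeries.coeff_mul]
  apply Finset.sum_eq_zero
  rintro ⟨p, q⟩ hpq
  rw [Finset.HasAntidiagonal.mem_antidiagonal] at hpq
  by_cases hp : p 1 < p 0
  · simp [hf p hp]
  · have hq : q 1 < q 0 := by
      have h0 : p 0 + q 0 = m 0 := by rw [← hpq]; simp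
      have h1 : p 1 + q 1 = m 1 := by rw [← hpq]; simp
      omega
    simp [hg q hq]

lemma good_inv {f} (hf : Good f) : Good f⁻¹ := by
  classical
  -- strong induction on the total degree
  suffices H : ∀ d : ℕ, ∀ m : Fin 3 →₀ ℕ, m 0 + m 1 + m 2 ≤ d → m 1 < m 0 →
      MvPowerSeries.coeff (R := ℚ) m f⁻¹ = 0 by
    intro m hm; exact H (m 0 + m 1 + m 2) m le_rfl hm
  intro d
  induction d with
  | zero => intro m hd hm; omega
  | succ d ih =>
    intro m hd hm
    have hm0 : m ≠ 0 := by
      intro h; rw [h] at hm; simp at hm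
    rw [MvPowerSeries.coeff_inv, if_neg hm0]
    rw [show (∑ x ∈ Finset.HasAntidiagonal.antidiagonal m,
        if x.2 < m then MvPowerSeries.coeff (R := ℚ) x.1 f * MvPowerSeries.coeff (R := ℚ) x.2 f⁻¹ else 0) = 0
      from ?_, mul_zero]
    apply Finset.sum_eq_zero
    rintro ⟨p, q⟩ hpq
    rw [Finset.HasAntidiagonal.mem_antidiagonal] at hpq
    by_cases hql : q < m
    · rw [if_pos hql]
      by_cases hp : p 1 < p 0
      · simp [hf p hp]
      · have hpm : ∀ i, p i + q i = m i := by
          intro i; rw [← hpq]; simp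
        have hq : q 1 < q 0 := by have := hpm 0; have := hpm 1; omega
        have hqle : ∀ i, q i ≤ m i := fun i => by have := hpm i; omega
        have hqlt : q 0 + q 1 + q 2 < m 0 + m 1 + m 2 := by
          have hne : q ≠ m := ne_of_lt hql
          have : ∃ i, q i < m i := by
            by_contra hc
            push_neg at hc
            exact hne (Finsupp.ext fun i => le_antisymm (hqle i) (hc i))
          obtain ⟨i, hi⟩ := this
          have h0 := hqle 0; have h1 := hqle 1; have h2 := hqle 2
          have hi' : q 0 < m 0 ∨ q 1 < m 1 ∨ q 2 < m 2 := by
            fin_cases i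
            · exact Or.inl hi
            · exact Or.inr (Or.inl hi)
            · exact Or.inr (Or.inr hi)
          omega
        rw [ih q (by omega) hq, mul_zero]
    · rw [if_neg hql]

lemma good_X1 : Good (X 1) := by
  have h := good_monomial (Finsupp.single (1 : Fin 3) 1) 1 (by simp)
  simpa [MvPowerSeries.X] using h

lemma good_X2 : Good (X 2) := by
  have h := good_monomial (Finsupp.single (2 : Fin 3) 1) 1 (by simp)
  simpa [MvPowerSeries.X] using h

lemma good_X0X1 : Good ((X 0 : MvPowerSeries (Fin 3) ℚ) * X 1) := by
  have h := good_monomial (Finsupp.single (0 : Fin 3) 1 + Finsupp.single (1 : Fin 3) 1) 1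
    (by simp [Finsupp.single_apply])
  have e : (X 0 : MvPowerSeries (Fin 3) ℚ) * X 1 =
      MvPowerSeries.monomial (R := ℚ) (Finsupp.single (0 : Fin 3) 1 + Finsupp.single (1 : Fin 3) 1) 1 := by
    rw [MvPowerSeries.X, MvPowerSeries.X, MvPowerSeries.monomial_mul_monomial, one_mul]
  rw [e]; exact h

lemma good_C : Good ((1 : MvPowerSeries (Fin 3) ℚ) - 2 * X 1 + X 0 * X 1) := by
  have h2 : (2 : MvPowerSeries (Fin 3) ℚ) * X 1 = X 1 + X 1 := two_mul _
  rw [h2]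
  exact good_add (good_sub good_one (good_add good_X1 good_X1)) good_X0X1

lemma good_B : Good ((1 : MvPowerSeries (Fin 3) ℚ) - X 1 * (1 + X 2)) :=
  good_sub good_one (good_mul good_X1 (good_add good_one good_X2))

lemma good_E : Good ((1 : MvPowerSeries (Fin 3) ℚ) + X 2 - X 1 * (1 + 2 * X 2)) := by
  have h2 : (2 : MvPowerSeries (Fin 3) ℚ) * X 2 = X 2 + X 2 := two_mul _
  rw [h2]
  exact good_sub (good_add good_one good_X2)
    (good_mul good_X1 (good_add good_one (good_add good_X2 good_X2)))

/-- The 'good cone' reduction (d = 2): in ℚ[[t₁,t₂,u]] (with t₁ = X 0, t₂ = X 1,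
u = X 2), for all a₁ > a₂ ≥ 0 and r ≥ 0, the coefficient of t₁^{a₁} t₂^{a₂} u^r in
(t₁−t₂)/((1−2t₂+t₁t₂)(1−t₁(1+u))(1−t₂(1+u))) equals the coefficient of
t₁^{a₁} t₂^{a₂} u^r in 1/((1−t₁(1+u))(1+u−t₂(1+2u))). -/
theorem good_cone_reduction (a₁ a₂ r : ℕ) (h : a₂ < a₁) :
    MvPowerSeries.coeff (R := ℚ)
        (Finsupp.single 0 a₁ + Finsupp.single 1 a₂ + Finsupp.single 2 r)
        (((X 0 : MvPowerSeries (Fin 3) ℚ) - X 1) *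
          ((1 - 2 * X 1 + X 0 * X 1) * (1 - X 0 * (1 + X 2)) * (1 - X 1 * (1 + X 2)))⁻¹) =
      MvPowerSeries.coeff (R := ℚ)
        (Finsupp.single 0 a₁ + Finsupp.single 1 a₂ + Finsupp.single 2 r)
        (((1 - (X 0 : MvPowerSeries (Fin 3) ℚ) * (1 + X 2)) *
          (1 + X 2 - X 1 * (1 + 2 * X 2)))⁻¹) := by
  set m : Fin 3 →₀ ℕ := Finsupp.single 0 a₁ + Finsupp.single 1 a₂ + Finsupp.single 2 r
    with hm_def
  have hm : m 1 < m 0 := by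
    simp only [hm_def, Finsupp.add_apply, Finsupp.single_apply]
    norm_num
    exact h
  have hA0 : constantCoeff (σ := Fin 3) (R := ℚ) ((1:MvPowerSeries (Fin 3) ℚ) - X 0 * (1 + X 2)) ≠ 0 := by
    simp
  have hB0 : constantCoeff (σ := Fin 3) (R := ℚ) ((1:MvPowerSeries (Fin 3) ℚ) - X 1 * (1 + X 2)) ≠ 0 := by
    simp
  have hC0 : constantCoeff (σ := Fin 3) (R := ℚ) ((1:MvPowerSeries (Fin 3) ℚ) - 2 * X 1 + X 0 * X 1) ≠ 0 := by
    simp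
  have hE0 : constantCoeff (σ := Fin 3) (R := ℚ)
      ((1:MvPowerSeries (Fin 3) ℚ) + X 2 - X 1 * (1 + 2 * X 2)) ≠ 0 := by
    simp
  have hAi := MvPowerSeries.mul_inv_cancel _ hA0
  have hBi := MvPowerSeries.mul_inv_cancel _ hB0
  have hCi := MvPowerSeries.mul_inv_cancel _ hC0
  have hEi := MvPowerSeries.mul_inv_cancel _ hE0
  have main : ((X 0 : MvPowerSeries (Fin 3) ℚ) - X 1) *
        ((1 - 2 * X 1 + X 0 * X 1) * (1 - X 0 * (1 + X 2)) * (1 - X 1 * (1 + X 2)))⁻¹ -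
        ((1 - X 0 * (1 + X 2)) * (1 + X 2 - X 1 * (1 + 2 * X 2)))⁻¹ =
      -((1 - X 1) * (1 - X 1)) *
        ((1 - 2 * X 1 + X 0 * X 1)⁻¹ * (1 - X 1 * (1 + X 2))⁻¹ *
          (1 + X 2 - X 1 * (1 + 2 * X 2))⁻¹) := by
    rw [MvPowerSeries.mul_inv_rev, MvPowerSeries.mul_inv_rev, MvPowerSeries.mul_inv_rev]
    linear_combination
      (-((X 0 : MvPowerSeries (Fin 3) ℚ) - X 1) * (1 - 2 * X 1 + X 0 * X 1)⁻¹ *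
          (1 - X 0 * (1 + X 2))⁻¹ * (1 - X 1 * (1 + X 2))⁻¹) * hEi
      + ((1 - (X 0 : MvPowerSeries (Fin 3) ℚ) * (1 + X 2))⁻¹ *
          (1 + X 2 - X 1 * (1 + 2 * X 2))⁻¹) * hCi
      + ((1 - (X 0 : MvPowerSeries (Fin 3) ℚ) * (1 + X 2))⁻¹ *
          (1 + X 2 - X 1 * (1 + 2 * X 2))⁻¹ * (1 - 2 * X 1 + X 0 * X 1) *
          (1 - 2 * X 1 + X 0 * X 1)⁻¹) * hBi
      - ((1 - (X 1 : MvPowerSeries (Fin 3) ℚ)) * (1 - X 1) * (1 - 2 * X 1 + X 0 * X 1)⁻¹ *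
          (1 - X 1 * (1 + X 2))⁻¹ * (1 + X 2 - X 1 * (1 + 2 * X 2))⁻¹) * hAi
  have hgood : Good (-(((1:MvPowerSeries (Fin 3) ℚ) - X 1) * (1 - X 1)) *
      ((1 - 2 * X 1 + X 0 * X 1)⁻¹ * (1 - X 1 * (1 + X 2))⁻¹ *
        (1 + X 2 - X 1 * (1 + 2 * X 2))⁻¹)) := by
    have g1 : Good ((1:MvPowerSeries (Fin 3) ℚ) - X 1) := good_sub good_one good_X1
    exact good_mul (good_neg (good_mul g1 g1))
      (good_mul (good_mul (good_inv good_C) (good_inv good_B)) (good_inv good_E))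
  have hz : MvPowerSeries.coeff (R := ℚ) m
      (((X 0 : MvPowerSeries (Fin 3) ℚ) - X 1) *
        ((1 - 2 * X 1 + X 0 * X 1) * (1 - X 0 * (1 + X 2)) * (1 - X 1 * (1 + X 2)))⁻¹ -
        ((1 - X 0 * (1 + X 2)) * (1 + X 2 - X 1 * (1 + 2 * X 2)))⁻¹) = 0 := by
    rw [main]
    exact hgood m hm
  rw [map_sub] at hz
  linarith
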